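/- arXiv:2401.05414 — 3 statements merged into one kernel-verified Lean document; each statement's English description precedes it below -/
import Mathlib

section
/- Let A be an n×n real matrix and let X, e : ℕ → ℝⁿ satisfy X_t = A X_{t-1} + e_t for all t ≥ 1, and suppose there is M ≥ 0 with ‖X_s‖ ≤ M for all s (in any fixed norm on ℝⁿ, with ‖A‖ the corresponding operator norm). For aggregation factor k ≥ 1, define X̃_t = (1/k)·∑_{i=1}^{k} X_{i+(t-1)k} and ẽ_t = (1/k)·∑_{i=1}^{k} e_{i+(t-1)k}. Then for every t ≥ 1, ‖X̃_t − A X̃_t − ẽ_t‖ ≤ 2‖A‖M/k. -/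
private lemma telescope_aux {V : Type*} [AddCommGroup V] (f : ℕ → V) :
    ∀ k : ℕ, ∑ i ∈ Finset.Icc 1 k, (f (i - 1) - f i) = f 0 - f k := by
  intro k
  induction k with
  | zero => simp
  | succ m ih =>
      rw [Finset.sum_Icc_succ_top (Nat.one_le_iff_ne_zero.mpr (Nat.succ_ne_zero m)), ih]
      simp only [Nat.add_sub_cancel]
      abel


/-- For a VAR(1) process `X t = A (X (t-1)) + e t` (`t ≥ 1`) with
`‖X s‖ ≤ M` for all `s`, and aggregation factor `k ≥ 1`, the aggregated series
`X̃ t = (1/k) ∑_{i=1}^k X (i+(t-1)k)`, `ẽ t = (1/k) ∑_{i=1}^k e (i+(t-1)k)` satisfy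
`‖X̃ t - A X̃ t - ẽ t‖ ≤ 2‖A‖M/k` for every `t ≥ 1`, where `‖A‖` is the operator
norm of `A` acting on `ℝⁿ`. -/
theorem var1_aggregated_residual_bound
    (n : ℕ) (A : Matrix (Fin n) (Fin n) ℝ) (X e : ℕ → Fin n → ℝ)
    (hrec : ∀ t : ℕ, 1 ≤ t → X t = A.mulVec (X (t - 1)) + e t)
    (M : ℝ) (hM : 0 ≤ M) (hbdd : ∀ s : ℕ, ‖X s‖ ≤ M)
    (k : ℕ) (hk : 1 ≤ k)
    (Xagg eagg : ℕ → Fin n → ℝ)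
    (hXagg : ∀ t, Xagg t = (1 / (k : ℝ)) • ∑ i ∈ Finset.Icc 1 k, X (i + (t - 1) * k))
    (heagg : ∀ t, eagg t = (1 / (k : ℝ)) • ∑ i ∈ Finset.Icc 1 k, e (i + (t - 1) * k)) :
    ∀ t : ℕ, 1 ≤ t →
      ‖Xagg t - A.mulVec (Xagg t) - eagg t‖ ≤
        2 * ‖LinearMap.toContinuousLinearMap A.mulVecLin‖ * M / k := by
  intro t ht
  set L := LinearMap.toContinuousLinearMap A.mulVecLin with hL
  set c := (t - 1) * k with hc
  have hA : ∀ v : Fin n → ℝ, A.mulVec v = L v := fun v => rfl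
  have hkpos : (0:ℝ) < k := by exact_mod_cast hk
  have key : Xagg t - A.mulVec (Xagg t) - eagg t
      = (1 / (k:ℝ)) • (A.mulVec (X (0 + c)) - A.mulVec (X (k + c))) := by
    rw [hXagg, heagg, Matrix.mulVec_smul, ← smul_sub, ← smul_sub]
    congr 1
    have hsum : A.mulVec (∑ i ∈ Finset.Icc 1 k, X (i + c))
        = ∑ i ∈ Finset.Icc 1 k, A.mulVec (X (i + c)) := by
      have h := map_sum A.mulVecLin (fun i => X (i + c)) (Finset.Icc 1 k)
      simpa only [Matrix.mulVecLin_apply] using h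
    rw [hsum, ← Finset.sum_sub_distrib, ← Finset.sum_sub_distrib]
    have hterm : ∀ i ∈ Finset.Icc 1 k,
        X (i + c) - A.mulVec (X (i + c)) - e (i + c)
          = (fun m => A.mulVec (X (m + c))) (i - 1)
            - (fun m => A.mulVec (X (m + c))) i := by
      intro i hi
      have hi1 : 1 ≤ i := (Finset.mem_Icc.mp hi).1
      have h1 : 1 ≤ i + c := le_trans hi1 (Nat.le_add_right _ _)
      have hsub : i + c - 1 = i - 1 + c := by omega
      have he : e (i + c) = X (i + c) - A.mulVec (X (i - 1 + c)) := by
        conv_lhs => rw [show e (i+c) = (A.mulVec (X (i + c - 1)) + e (i+c)) - A.mulVec (X (i+c-1)) by abel]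
        rw [← hrec (i + c) h1, hsub]
      rw [he]
      abel
    rw [Finset.sum_congr rfl hterm, telescope_aux (fun m => A.mulVec (X (m + c))) k]
  rw [key, norm_smul]
  have hnrm : ‖(1 / (k:ℝ))‖ = 1 / (k:ℝ) := by
    rw [Real.norm_eq_abs, abs_of_pos (by positivity)]
  rw [hnrm]
  have hb : ‖A.mulVec (X (0 + c)) - A.mulVec (X (k + c))‖ ≤ 2 * ‖L‖ * M := by
    calc ‖A.mulVec (X (0 + c)) - A.mulVec (X (k + c))‖
        ≤ ‖A.mulVec (X (0 + c))‖ + ‖A.mulVec (X (k + c))‖ := norm_sub_le _ _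
      _ ≤ ‖L‖ * ‖X (0 + c)‖ + ‖L‖ * ‖X (k + c)‖ := by
          rw [hA, hA]; exact add_le_add (L.le_opNorm _) (L.le_opNorm _)
      _ ≤ ‖L‖ * M + ‖L‖ * M := by
          have := norm_nonneg L
          exact add_le_add (mul_le_mul_of_nonneg_left (hbdd _) this)
            (mul_le_mul_of_nonneg_left (hbdd _) this)
      _ = 2 * ‖L‖ * M := by ring
  calc (1 / (k:ℝ)) * ‖A.mulVec (X (0 + c)) - A.mulVec (X (k + c))‖
      ≤ (1 / (k:ℝ)) * (2 * ‖L‖ * M) := by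
        exact mul_le_mul_of_nonneg_left hb (by positivity)
    _ = 2 * ‖L‖ * M / k := by field_simp
end

section
/- Let A be an n×n real matrix and let X, e : ℕ → ℝⁿ satisfy X_t = A X_{t-1} + e_t for all t ≥ 1, with sup_s ‖X_s‖ < ∞. For each aggregation factor k ≥ 1 write X̃_t^{(k)} = (1/k)·∑_{i=1}^{k} X_{i+(t-1)k} and ẽ_t^{(k)} = (1/k)·∑_{i=1}^{k} e_{i+(t-1)k}. Then for every fixed t ≥ 1, the residual X̃_t^{(k)} − A X̃_t^{(k)} − ẽ_t^{(k)} tends to 0 in ℝⁿ as k → ∞; i.e., in the limit of large aggregation the aggregated data satisfy the instantaneous linear structural equation X̃_t = A X̃_t + ẽ_t. -/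
/-- For a VAR(1) process `X t = A (X (t-1)) + e t` (`t ≥ 1`) with
`sup_s ‖X s‖ < ∞`, the residual `X̃ₜ⁽ᵏ⁾ - A X̃ₜ⁽ᵏ⁾ - ẽₜ⁽ᵏ⁾` of the aggregated series
`X̃ₜ⁽ᵏ⁾ = (1/k) ∑_{i=1}^k X (i+(t-1)k)`, `ẽₜ⁽ᵏ⁾ = (1/k) ∑_{i=1}^k e (i+(t-1)k)`
tends to `0` as the aggregation factor `k → ∞`, for every fixed `t ≥ 1`. -/
theorem var1_aggregated_residual_tendsto_zero
    (n : ℕ) (A : Matrix (Fin n) (Fin n) ℝ) (X e : ℕ → Fin n → ℝ)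
    (hrec : ∀ t : ℕ, 1 ≤ t → X t = A.mulVec (X (t - 1)) + e t)
    (hbdd : ∃ M : ℝ, ∀ s : ℕ, ‖X s‖ ≤ M)
    (Xagg eagg : ℕ → ℕ → Fin n → ℝ)
    (hXagg : ∀ t k, Xagg t k = (1 / (k : ℝ)) • ∑ i ∈ Finset.Icc 1 k, X (i + (t - 1) * k))
    (heagg : ∀ t k, eagg t k = (1 / (k : ℝ)) • ∑ i ∈ Finset.Icc 1 k, e (i + (t - 1) * k)) :
    ∀ t : ℕ, 1 ≤ t →
      Filter.Tendsto (fun k : ℕ => Xagg t k - A.mulVec (Xagg t k) - eagg t k)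
        Filter.atTop (nhds (0 : Fin n → ℝ)) := by
  intro t ht
  obtain ⟨M, hM⟩ := hbdd
  set L : (Fin n → ℝ) →L[ℝ] (Fin n → ℝ) :=
    LinearMap.toContinuousLinearMap A.mulVecLin with hL
  have hLv : ∀ v, L v = A.mulVec v := fun v => rfl
  -- pointwise identity for k ≥ 1
  have key : ∀ k : ℕ, 1 ≤ k →
      Xagg t k - A.mulVec (Xagg t k) - eagg t k
        = (1 / (k : ℝ)) • A.mulVec (X ((t - 1) * k) - X (k + (t - 1) * k)) := by
    intro k hk
    rw [hXagg, heagg]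
    set m := (t - 1) * k with hm
    have hsum : ∑ i ∈ Finset.Icc 1 k, X (i + m)
        = A.mulVec (∑ i ∈ Finset.Icc 1 k, X (i + m - 1))
          + ∑ i ∈ Finset.Icc 1 k, e (i + m) := by
      rw [show A.mulVec (∑ i ∈ Finset.Icc 1 k, X (i + m - 1))
          = ∑ i ∈ Finset.Icc 1 k, A.mulVec (X (i + m - 1)) from
        map_sum A.mulVecLin _ _, ← Finset.sum_add_distrib]
      refine Finset.sum_congr rfl fun i hi => ?_
      have hi1 : 1 ≤ i := (Finset.mem_Icc.mp hi).1
      exact hrec (i + m) (le_trans hi1 (Nat.le_add_right _ _))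
    have htel : (∑ i ∈ Finset.Icc 1 k, X (i + m - 1))
        - (∑ i ∈ Finset.Icc 1 k, X (i + m)) = X m - X (k + m) := by
      have h1 : ∑ i ∈ Finset.Icc 1 k, X (i + m - 1) = ∑ j ∈ Finset.range k, X (j + m) := by
        rw [← Finset.Ico_add_one_right_eq_Icc, Finset.sum_Ico_eq_sum_range, Nat.add_sub_cancel]
        exact Finset.sum_congr rfl fun j _ => congrArg X (by omega)
      have h2 : ∑ i ∈ Finset.Icc 1 k, X (i + m) = ∑ j ∈ Finset.range k, X (j + 1 + m) := by
        rw [← Finset.Ico_add_one_right_eq_Icc, Finset.sum_Ico_eq_sum_range, Nat.add_sub_cancel]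
        exact Finset.sum_congr rfl fun j _ => congrArg X (by omega)
      rw [h1, h2, ← Finset.sum_sub_distrib]
      have := Finset.sum_range_sub (f := fun j => X (j + m) - X (j + 1 + m))
      calc ∑ j ∈ Finset.range k, (X (j + m) - X (j + 1 + m))
          = -∑ j ∈ Finset.range k, (X (j + 1 + m) - X (j + m)) := by
            rw [← Finset.sum_neg_distrib]; simp
        _ = -(X (k + m) - X (0 + m)) := by
            rw [Finset.sum_range_sub (fun j => X (j + m))]
        _ = X m - X (k + m) := by simp [neg_sub]
    calc (1 / (k : ℝ)) • ∑ i ∈ Finset.Icc 1 k, X (i + m)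
          - A.mulVec ((1 / (k : ℝ)) • ∑ i ∈ Finset.Icc 1 k, X (i + m))
          - (1 / (k : ℝ)) • ∑ i ∈ Finset.Icc 1 k, e (i + m)
        = (1 / (k : ℝ)) • ((∑ i ∈ Finset.Icc 1 k, X (i + m))
            - A.mulVec (∑ i ∈ Finset.Icc 1 k, X (i + m))
            - ∑ i ∈ Finset.Icc 1 k, e (i + m)) := by
          rw [smul_sub, smul_sub, Matrix.mulVec_smul]
      _ = (1 / (k : ℝ)) • (A.mulVec ((∑ i ∈ Finset.Icc 1 k, X (i + m - 1))
            - ∑ i ∈ Finset.Icc 1 k, X (i + m))) := by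
          rw [Matrix.mulVec_sub]
          congr 1
          nth_rewrite 1 [hsum]
          abel
      _ = (1 / (k : ℝ)) • A.mulVec (X m - X (k + m)) := by rw [htel]
  -- the bounding function tends to 0
  have hb : Filter.Tendsto (fun k : ℕ => (1 / (k : ℝ)) * (‖L‖ * (2 * M)))
      Filter.atTop (nhds 0) := by
    simpa using (tendsto_one_div_atTop_nhds_zero_nat.mul_const (‖L‖ * (2 * M)))
  have hM0 : 0 ≤ M := le_trans (norm_nonneg _) (hM 0)
  refine squeeze_zero_norm' ?_ hb
  filter_upwards [Filter.eventually_ge_atTop 1] with k hk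
  rw [key k hk]
  have h1 : ‖A.mulVec (X ((t - 1) * k) - X (k + (t - 1) * k))‖ ≤ ‖L‖ * (2 * M) := by
    rw [← hLv]
    calc ‖L (X ((t - 1) * k) - X (k + (t - 1) * k))‖
        ≤ ‖L‖ * ‖X ((t - 1) * k) - X (k + (t - 1) * k)‖ := L.le_opNorm _
      _ ≤ ‖L‖ * (2 * M) := by
          refine mul_le_mul_of_nonneg_left ?_ (norm_nonneg L)
          calc ‖X ((t - 1) * k) - X (k + (t - 1) * k)‖
              ≤ ‖X ((t - 1) * k)‖ + ‖X (k + (t - 1) * k)‖ := norm_sub_le _ _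
            _ ≤ M + M := add_le_add (hM _) (hM _)
            _ = 2 * M := by ring
  rw [norm_smul]
  have hk0 : (0:ℝ) ≤ 1 / (k:ℝ) := by positivity
  rw [Real.norm_eq_abs, abs_of_nonneg hk0]
  exact mul_le_mul_of_nonneg_left h1 hk0
end

section
/- Let A be an n×n real matrix with I − A invertible, and let X, e : ℕ → ℝⁿ satisfy X_t = A X_{t-1} + e_t for all t ≥ 1, with sup_s ‖X_s‖ < ∞. For each aggregation factor k ≥ 1 write X̃_t^{(k)} = (1/k)·∑_{i=1}^{k} X_{i+(t-1)k} and ẽ_t^{(k)} = (1/k)·∑_{i=1}^{k} e_{i+(t-1)k}. Then for every fixed t ≥ 1, X̃_t^{(k)} − (I − A)^{-1} ẽ_t^{(k)} → 0 in ℝⁿ as k → ∞. -/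
/-- For a VAR(1) process `X t = A (X (t-1)) + e t` (`t ≥ 1`) with
`I - A` invertible and `sup_s ‖X s‖ < ∞`, the aggregated series satisfies
`X̃ₜ⁽ᵏ⁾ - (I - A)⁻¹ ẽₜ⁽ᵏ⁾ → 0` as the aggregation factor `k → ∞`, for every fixed `t ≥ 1`. -/
theorem var1_aggregated_limit_structural_solution
    (n : ℕ) (A : Matrix (Fin n) (Fin n) ℝ) (hA : IsUnit (1 - A))
    (X e : ℕ → Fin n → ℝ)
    (hrec : ∀ t : ℕ, 1 ≤ t → X t = A.mulVec (X (t - 1)) + e t)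
    (hbdd : ∃ M : ℝ, ∀ s : ℕ, ‖X s‖ ≤ M)
    (Xagg eagg : ℕ → ℕ → Fin n → ℝ)
    (hXagg : ∀ t k, Xagg t k = (1 / (k : ℝ)) • ∑ i ∈ Finset.Icc 1 k, X (i + (t - 1) * k))
    (heagg : ∀ t k, eagg t k = (1 / (k : ℝ)) • ∑ i ∈ Finset.Icc 1 k, e (i + (t - 1) * k)) :
    ∀ t : ℕ, 1 ≤ t →
      Filter.Tendsto (fun k : ℕ => Xagg t k - ((1 - A)⁻¹).mulVec (eagg t k))
        Filter.atTop (nhds (0 : Fin n → ℝ)) := by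
  intro t ht
  obtain ⟨M, hM⟩ := hbdd
  have hdet : IsUnit (1 - A).det := (Matrix.isUnit_iff_isUnit_det _).mp hA
  have hinv : (1 - A)⁻¹ * (1 - A) = 1 := Matrix.nonsing_inv_mul _ hdet
  set B := (1 - A)⁻¹ with hB
  have key : ∀ k : ℕ, 1 ≤ k →
      Xagg t k - B.mulVec (eagg t k)
        = (1 / (k : ℝ)) • ((B * A).mulVec (X ((t - 1) * k) - X (k + (t - 1) * k))) := by
    intro k hk
    set m := (t - 1) * k with hm
    set S := ∑ i ∈ Finset.Icc 1 k, X (i + m) with hS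
    have h1 : ∀ i ∈ Finset.Icc 1 k, e (i + m) = X (i + m) - A.mulVec (X (i - 1 + m)) := by
      intro i hi
      have hi1 : 1 ≤ i := (Finset.mem_Icc.mp hi).1
      have h := hrec (i + m) (le_trans hi1 (Nat.le_add_right _ _))
      have h2 : i + m - 1 = i - 1 + m := by omega
      rw [h2] at h
      rw [h]; abel
    have hreidx : ∑ i ∈ Finset.Icc 1 k, X (i - 1 + m) = S + X m - X (k + m) := by
      have e1 : ∑ i ∈ Finset.Icc 1 k, X (i - 1 + m)
          = ∑ i ∈ Finset.range k, X (i + m) := by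
        rw [← Finset.Ico_add_one_right_eq_Icc, Finset.sum_Ico_eq_sum_range]
        refine Finset.sum_congr rfl fun i _ => ?_
        have : 1 + i - 1 + m = i + m := by omega
        rw [this]
      have e2 : S = ∑ i ∈ Finset.range k, X (i + 1 + m) := by
        rw [hS, ← Finset.Ico_add_one_right_eq_Icc, Finset.sum_Ico_eq_sum_range]
        refine Finset.sum_congr rfl fun i _ => ?_
        have : 1 + i + m = i + 1 + m := by omega
        rw [this]
      have tel : (∑ i ∈ Finset.range k, X (i + 1 + m)) - (∑ i ∈ Finset.range k, X (i + m))
          = X (k + m) - X m := by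
        have := Finset.sum_range_sub (fun i => X (i + m)) k
        rw [Finset.sum_sub_distrib] at this
        simpa using this
      rw [sub_eq_iff_eq_add] at tel
      rw [e1, e2, tel]
      abel
    have hesum : ∑ i ∈ Finset.Icc 1 k, e (i + m)
        = (1 - A).mulVec S + A.mulVec (X (k + m) - X m) := by
      rw [Finset.sum_congr rfl h1, Finset.sum_sub_distrib]
      have h3 : ∑ i ∈ Finset.Icc 1 k, A.mulVec (X (i - 1 + m))
          = A.mulVec (S + X m - X (k + m)) := by
        rw [← hreidx]
        simp only [← Matrix.mulVecLin_apply, ← map_sum]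
      rw [h3, Matrix.sub_mulVec, Matrix.one_mulVec, Matrix.mulVec_sub, Matrix.mulVec_sub,
        Matrix.mulVec_add]
      abel
    have hBe : B.mulVec (eagg t k)
        = (1 / (k : ℝ)) • (S + B.mulVec (A.mulVec (X (k + m) - X m))) := by
      rw [heagg, ← hm, hesum, Matrix.mulVec_smul, Matrix.mulVec_add, Matrix.mulVec_mulVec, hinv,
        Matrix.one_mulVec]
    rw [hXagg, hBe, ← hm, ← hS, ← smul_sub]
    congr 1
    have hneg : X m - X (k + m) = -(X (k + m) - X m) := by abel
    rw [← Matrix.mulVec_mulVec, hneg, Matrix.mulVec_neg, Matrix.mulVec_neg]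
    abel
  -- the limit
  set L := LinearMap.toContinuousLinearMap (Matrix.mulVecLin (B * A)) with hL
  have hLe : ∀ v : Fin n → ℝ, ‖(B * A).mulVec v‖ ≤ ‖L‖ * ‖v‖ := by
    intro v
    simpa [hL, Matrix.mulVecLin_apply] using L.le_opNorm v
  have hbd : Filter.IsBoundedUnder (· ≤ ·) Filter.atTop
      (Norm.norm ∘ fun k : ℕ => (B * A).mulVec (X ((t - 1) * k) - X (k + (t - 1) * k))) := by
    apply Filter.isBoundedUnder_of
    refine ⟨‖L‖ * (M + M), fun k => ?_⟩
    calc ‖(B * A).mulVec (X ((t - 1) * k) - X (k + (t - 1) * k))‖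
        ≤ ‖L‖ * ‖X ((t - 1) * k) - X (k + (t - 1) * k)‖ := hLe _
      _ ≤ ‖L‖ * (M + M) := by
          apply mul_le_mul_of_nonneg_left _ (norm_nonneg L)
          exact (norm_sub_le _ _).trans (add_le_add (hM _) (hM _))
  have hsmall : Filter.Tendsto (fun k : ℕ => (1 / (k : ℝ))) Filter.atTop (nhds 0) :=
    tendsto_one_div_atTop_nhds_zero_nat
  have hlim := hsmall.zero_smul_isBoundedUnder_le hbd
  refine hlim.congr' ?_
  filter_upwards [Filter.eventually_ge_atTop 1] with k hk
  exact (key k hk).symm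
end
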